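/- Let R be a Noetherian normal domain and let I be a proper nonzero principal ideal of R. Then there exist height one prime ideals P₁, …, P_t of R and positive integers n₁, …, n_t such that I = P₁^(n₁) ∩ ⋯ ∩ P_t^(n_t), where P^(n) denotes the n-th symbolic power of P. -/

import Mathlib

/-- The `n`-th symbolic power of a prime ideal `P`: the contraction to `R` of the
ideal `P^n R_P` of the localization `R_P`. -/
noncomputable def symbolicPower {R : Type*} [CommRing R] (P : Ideal R) [P.IsPrime] (n : ℕ) :
    Ideal R :=
  Ideal.comap (algebraMap R (Localization.AtPrime P))
    (Ideal.map (algebraMap R (Localization.AtPrime P)) (P ^ n))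

/-- A prime ideal of a domain has height one if it is nonzero and the only prime ideal
strictly below it is the zero ideal. -/
def HeightOne {R : Type*} [CommRing R] (P : Ideal R) : Prop :=
  P.IsPrime ∧ P ≠ ⊥ ∧ ∀ Q : Ideal R, Q.IsPrime → Q < P → Q = ⊥

open IsLocalRing

/-- If a Noetherian local integrally closed domain has elements `a ≠ 0`, `b ∉ (a)` with
`b·m ⊆ (a)`, then the maximal ideal is principal.  (Adapted from the proof of
`maximalIdeal_isPrincipal_of_isDedekindDomain` in Mathlib.) -/
lemma aux_max_principal {S : Type*} [CommRing S] [IsDomain S] [IsNoetherianRing S]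
    [IsLocalRing S] [IsIntegrallyClosed S] {a b : S} (ha₂ : a ≠ 0)
    (ha₁ : a ∈ maximalIdeal S) (hb₂ : b ∉ Ideal.span {a})
    (hb₃ : ∀ m ∈ maximalIdeal S, ∃ k : S, k * a = b * m) :
    (maximalIdeal S).IsPrincipal := by
  have hb₄ : b ≠ 0 := by rintro rfl; exact hb₂ (zero_mem _)
  let K := FractionRing S
  let x : K := algebraMap S K b / algebraMap S K a
  let M := Submodule.map (Algebra.linearMap S K) (maximalIdeal S)
  have ha₃ : algebraMap S K a ≠ 0 := IsFractionRing.to_map_eq_zero_iff.not.mpr ha₂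
  by_cases hx : ∀ y ∈ M, x * y ∈ M
  · have := isIntegral_of_smul_mem_submodule M ?_ ?_ x hx
    · obtain ⟨y, e⟩ := IsIntegrallyClosed.algebraMap_eq_of_integral this
      refine (hb₂ (Ideal.mem_span_singleton'.mpr ⟨y, ?_⟩)).elim
      apply IsFractionRing.injective S K
      rw [map_mul, e, div_mul_cancel₀ _ ha₃]
    · rw [Submodule.ne_bot_iff]; refine ⟨_, ⟨a, ha₁, rfl⟩, ?_⟩
      exact (IsFractionRing.to_map_eq_zero_iff (K := K)).not.mpr ha₂
    · apply Submodule.FG.map; exact IsNoetherian.noetherian _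
  · have :
        (M.map (DistribMulAction.toLinearMap S K x)).comap (Algebra.linearMap S K) = ⊤ := by
      by_contra h; apply hx
      rintro m' ⟨m, hm, rfl : algebraMap S K m = m'⟩
      obtain ⟨k, hk⟩ := hb₃ m hm
      have hk' : x * algebraMap S K m = algebraMap S K k := by
        rw [← mul_div_right_comm, ← map_mul, ← hk, map_mul, mul_div_cancel_right₀ _ ha₃]
      exact ⟨k, le_maximalIdeal h ⟨_, ⟨_, hm, rfl⟩, hk'⟩, hk'.symm⟩
    obtain ⟨y, hy₁, hy₂⟩ : ∃ y ∈ maximalIdeal S, b * y = a := by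
      rw [Ideal.eq_top_iff_one, Submodule.mem_comap] at this
      obtain ⟨_, ⟨y, hy, rfl⟩, hy' : x * algebraMap S K y = algebraMap S K 1⟩ := this
      rw [map_one, ← mul_div_right_comm, div_eq_one_iff_eq ha₃, ← map_mul] at hy'
      exact ⟨y, hy, IsFractionRing.injective S K hy'⟩
    refine ⟨⟨y, ?_⟩⟩
    apply le_antisymm
    · intro m hm; obtain ⟨k, hk⟩ := hb₃ m hm; rw [← hy₂, mul_comm, mul_assoc] at hk
      rw [← mul_left_cancel₀ hb₄ hk, mul_comm]; exact Ideal.mem_span_singleton'.mpr ⟨_, rfl⟩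
    · rwa [Submodule.span_le, Set.singleton_subset_iff]

/-- Variant of `aux_max_principal` where the hypothesis is that the maximal ideal is
contained in the radical of the colon ideal `((a) : b)`. -/
lemma aux_max_principal' {S : Type*} [CommRing S] [IsDomain S] [IsNoetherianRing S]
    [IsLocalRing S] [IsIntegrallyClosed S] {a b : S} (ha₂ : a ≠ 0)
    (ha₁ : a ∈ maximalIdeal S) (hb : b ∉ Ideal.span {a})
    (hrad : maximalIdeal S ≤ ((Ideal.span {a}).colon (Ideal.span {b})).radical) :
    (maximalIdeal S).IsPrincipal := by
  classical
  have hex : ∃ n : ℕ, maximalIdeal S ^ n ≤ (Ideal.span {a}).colon (Ideal.span {b}) := by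
    obtain ⟨n, hn⟩ := Ideal.exists_radical_pow_le_of_fg
      ((Ideal.span {a}).colon (Ideal.span {b})) (IsNoetherian.noetherian _)
    exact ⟨n, le_trans (Ideal.pow_right_mono hrad n) hn⟩
  have hnspec := Nat.find_spec hex
  have hn0 : Nat.find hex ≠ 0 := by
    intro h
    rw [h, pow_zero, Ideal.one_eq_top, top_le_iff] at hnspec
    apply hb
    have h1 : (1 : S) ∈ (Ideal.span {a}).colon (Ideal.span {b}) := by rw [hnspec]; trivial
    simpa using Submodule.mem_colon_span_singleton.mp h1
  obtain ⟨n', hn'⟩ := Nat.exists_eq_succ_of_ne_zero hn0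
  have hmin : ¬ maximalIdeal S ^ n' ≤ (Ideal.span {a}).colon (Ideal.span {b}) :=
    Nat.find_min hex (by omega)
  obtain ⟨z, hz1, hz2⟩ := SetLike.not_le_iff_exists.mp hmin
  have hzb : z * b ∉ Ideal.span {a} := fun h => hz2 (Submodule.mem_colon_span_singleton.mpr h)
  refine aux_max_principal ha₂ ha₁ hzb ?_
  intro w hw
  have hwz : w * z ∈ maximalIdeal S ^ (n' + 1) := by
    rw [pow_succ']
    exact Ideal.mul_mem_mul hw hz1
  have : w * z ∈ (Ideal.span {a}).colon (Ideal.span {b}) := (hn' ▸ hnspec) hwz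
  obtain ⟨k, hk⟩ := Ideal.mem_span_singleton'.mp (Submodule.mem_colon_span_singleton.mp this)
  exact ⟨k, by rw [hk, smul_eq_mul]; ring⟩

/-- Key lemma: a primary component of a nonzero principal ideal in a Noetherian
integrally closed domain has height-one radical and is a symbolic power of its radical. -/
lemma aux_key {R : Type*} [CommRing R] [IsDomain R] [IsNoetherianRing R] [IsIntegrallyClosed R]
    {a b : R} (ha : a ≠ 0) {Q : Ideal R} (hQ : Q.IsPrimary) [hP : Q.radical.IsPrime]
    (hIQ : Ideal.span {a} ≤ Q) (hbQ : b ∉ Q)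
    (hcol : ∀ p ∈ Q.radical, ∃ k : ℕ, p ^ k * b ∈ Ideal.span {a}) :
    HeightOne Q.radical ∧ ∃ n : ℕ, 0 < n ∧ Q = symbolicPower Q.radical n := by
  set P := Q.radical with hPdef
  set S := Localization.AtPrime P with hSdef
  set f := algebraMap R S with hfdef
  haveI : IsNoetherianRing S := IsLocalization.isNoetherianRing P.primeCompl S ‹_›
  haveI : IsIntegrallyClosed S :=
    isIntegrallyClosed_of_isLocalization S P.primeCompl P.primeCompl_le_nonZeroDivisors
  have finj : Function.Injective f := IsLocalization.injective S P.primeCompl_le_nonZeroDivisors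
  have hQP : Q ≤ P := Ideal.le_radical
  have hQprim := Ideal.isPrimary_iff.mp hQ
  -- contraction of the extension of Q is Q
  have contr : ∀ r : R, f r ∈ Ideal.map f Q → r ∈ Q := by
    intro r hr
    obtain ⟨⟨⟨q, hq⟩, s⟩, h⟩ := (IsLocalization.mem_map_algebraMap_iff P.primeCompl S).mp hr
    have hrs : r * (s : R) ∈ Q := by
      have : r * (s : R) = q := finj (by rw [map_mul]; exact h)
      rw [this]; exact hq
    rcases hQprim.2 hrs with h' | h'
    · exact h'
    · exact absurd h' s.2
  have hmax : Ideal.map f P = maximalIdeal S := Localization.AtPrime.map_eq_maximalIdeal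
  have haQ : a ∈ Q := hIQ (Ideal.mem_span_singleton_self a)
  have hfa0 : f a ≠ 0 := fun h => ha (finj (by rw [h, map_zero]))
  have hfam : f a ∈ maximalIdeal S := hmax ▸ Ideal.mem_map_of_mem f (hQP haQ)
  have hspan : Ideal.map f (Ideal.span {a}) = Ideal.span {f a} := by
    rw [Ideal.map_span, Set.image_singleton]
  have hfb : f b ∉ Ideal.span {f a} := by
    rw [← hspan]
    exact fun h => hbQ (contr b (Ideal.map_mono hIQ h))
  have hrad : maximalIdeal S ≤ ((Ideal.span {f a}).colon (Ideal.span {f b})).radical := by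
    rw [← hmax, Ideal.map_le_iff_le_comap]
    intro p hp
    obtain ⟨k, hk⟩ := hcol p hp
    refine Ideal.mem_comap.mpr (Ideal.mem_radical_iff.mpr ⟨k, ?_⟩)
    refine Submodule.mem_colon_span_singleton.mpr ?_
    rw [smul_eq_mul, ← map_pow, ← map_mul, ← hspan]
    exact Ideal.mem_map_of_mem f hk
  have hprinc := aux_max_principal' hfa0 hfam hfb hrad
  have hpow := exists_maximalIdeal_pow_eq_of_principal S hprinc
  -- contraction facts for prime ideals below P
  have hcomapmap : ∀ J : Ideal R, J.IsPrime → J ≤ P → Ideal.comap f (Ideal.map f J) = J := by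
    intro J hJ hJP
    refine IsLocalization.under_map_of_isPrime_disjoint P.primeCompl S hJ ?_
    rw [Set.disjoint_iff]
    rintro x ⟨hx1, hx2⟩
    exact hx1 (hJP hx2)
  have hPbot : P ≠ ⊥ := by
    intro h
    have hmem : a ∈ (⊥ : Ideal R) := h ▸ hQP haQ
    exact ha (by simpa using hmem)
  constructor
  · refine ⟨hP, hPbot, fun J hJ hJP => ?_⟩
    by_contra hJne
    have hdisj : Disjoint (P.primeCompl : Set R) (J : Set R) := by
      rw [Set.disjoint_iff]
      rintro x ⟨hx1, hx2⟩
      exact hx1 (hJP.le hx2)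
    have hJm : (Ideal.map f J).IsPrime :=
      IsLocalization.isPrime_of_isPrime_disjoint P.primeCompl S J hJ hdisj
    have hmapne : Ideal.map f J ≠ ⊥ := by
      intro h
      apply hJne
      rw [← hcomapmap J hJ hJP.le, h]
      refine le_antisymm (fun x hx => ?_) bot_le
      exact (Submodule.mem_bot R).mpr (finj (by simpa using hx))
    obtain ⟨n, hn⟩ := hpow _ hmapne
    have hn0 : n ≠ 0 := by
      rintro rfl
      rw [pow_zero, Ideal.one_eq_top] at hn
      exact hJm.ne_top hn
    have h1 : Ideal.map f J ≤ maximalIdeal S := hn ▸ Ideal.pow_le_self hn0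
    have h2 : maximalIdeal S ≤ Ideal.map f J := by
      calc maximalIdeal S ≤ (maximalIdeal S).radical := Ideal.le_radical
        _ = ((maximalIdeal S) ^ n).radical := (Ideal.radical_pow _ hn0).symm
        _ = (Ideal.map f J).radical := by rw [hn]
        _ = Ideal.map f J := hJm.radical
    have hJP' : J = P := by
      rw [← hcomapmap J hJ hJP.le, le_antisymm h1 h2, ← hmax, hcomapmap P hP le_rfl]
    exact absurd hJP' hJP.ne
  · have hmapQne : Ideal.map f Q ≠ ⊥ := by
      intro h
      exact hfa0 (by simpa [h] using Ideal.mem_map_of_mem f haQ)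
    obtain ⟨n, hn⟩ := hpow _ hmapQne
    have hn0 : n ≠ 0 := by
      rintro rfl
      rw [pow_zero, Ideal.one_eq_top] at hn
      have : (1 : R) ∈ Q := contr 1 (by rw [hn]; exact Submodule.mem_top)
      exact hQprim.1 (Ideal.eq_top_iff_one _ |>.mpr this)
    refine ⟨n, Nat.pos_of_ne_zero hn0, ?_⟩
    show Q = Ideal.comap f (Ideal.map f (P ^ n))
    rw [Ideal.map_pow, hmax, ← hn]
    exact (le_antisymm (fun r hr => contr r hr) Ideal.le_comap_map).symm

/-- Let `R` be a Noetherian normal domain and `I` a proper nonzero principal ideal.  Then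
there exist height one prime ideals `P₁, …, P_t` and positive integers `n₁, …, n_t` such
that `I = P₁^(n₁) ∩ ⋯ ∩ P_t^(n_t)`. -/
theorem volume_limits_stmt0 {R : Type*} [CommRing R] [IsDomain R] [IsNoetherianRing R]
    [IsIntegrallyClosed R] (I : Ideal R) (hI0 : I ≠ ⊥) (hItop : I ≠ ⊤)
    (hIprin : I.IsPrincipal) :
    ∃ (t : ℕ) (P : Fin t → Ideal R) (n : Fin t → ℕ) (hP : ∀ i, (P i).IsPrime),
      (∀ i, HeightOne (P i)) ∧ (∀ i, 0 < n i) ∧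
      I = ⨅ i, @symbolicPower R _ (P i) (hP i) (n i) := by
  classical
  obtain ⟨a, haI⟩ := hIprin
  have haI : I = Ideal.span {a} := haI
  have ha0 : a ≠ 0 := by
    rintro rfl
    exact hI0 (by rw [haI]; simp)
  obtain ⟨s, hsinf, hsprim, -, hmin⟩ : ∃ s : Finset (Ideal R), Submodule.IsMinimalPrimaryDecomposition I s :=
    Ideal.IsLasker.minimal (Ideal.isLasker R R) I
  have main : ∀ Q ∈ s, ∃ (h : Q.radical.IsPrime) (n : ℕ), HeightOne Q.radical ∧ 0 < n ∧
      Q = @symbolicPower R _ Q.radical h n := by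
    intro Q hQs
    have hQprim : Q.IsPrimary := hsprim hQs
    haveI hPp : Q.radical.IsPrime := Ideal.isPrime_radical hQprim
    have hIQ : I ≤ Q := hsinf ▸ Finset.inf_le hQs
    obtain ⟨b, hb1, hb2⟩ := SetLike.not_le_iff_exists.mp (hmin hQs)
    have hcol : ∀ p ∈ Q.radical, ∃ k : ℕ, p ^ k * b ∈ Ideal.span {a} := by
      intro p hp
      obtain ⟨k, hk⟩ := Ideal.mem_radical_iff.mp hp
      refine ⟨k, ?_⟩
      rw [← haI, ← hsinf]
      rw [Submodule.mem_finsetInf]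
      intro J hJ
      by_cases hJQ : J = Q
      · subst hJQ
        exact Ideal.mul_mem_right _ _ hk
      · have hbJ : b ∈ J := Submodule.mem_finsetInf.mp hb1 J (Finset.mem_erase.mpr ⟨hJQ, hJ⟩)
        exact Ideal.mul_mem_left _ _ hbJ
    obtain ⟨h1, h2⟩ := aux_key ha0 hQprim (haI ▸ hIQ) hb2 hcol
    obtain ⟨n, hn1, hn2⟩ := h2
    exact ⟨hPp, n, h1, hn1, hn2⟩
  choose hPrime nfun hH1 hnpos hQeq using main
  refine ⟨Fintype.card {x // x ∈ s},
    fun i => ((Fintype.equivFin {x // x ∈ s}).symm i : Ideal R).radical,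
    fun i => nfun _ ((Fintype.equivFin {x // x ∈ s}).symm i).2,
    fun i => hPrime _ ((Fintype.equivFin {x // x ∈ s}).symm i).2,
    fun i => hH1 _ ((Fintype.equivFin {x // x ∈ s}).symm i).2,
    fun i => hnpos _ ((Fintype.equivFin {x // x ∈ s}).symm i).2, ?_⟩
  have hbody : ∀ i : Fin (Fintype.card {x // x ∈ s}),
      @symbolicPower R _ (((Fintype.equivFin {x // x ∈ s}).symm i : Ideal R).radical)
        (hPrime _ ((Fintype.equivFin {x // x ∈ s}).symm i).2)
        (nfun _ ((Fintype.equivFin {x // x ∈ s}).symm i).2)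
      = ((Fintype.equivFin {x // x ∈ s}).symm i : Ideal R) := fun i =>
    (hQeq _ ((Fintype.equivFin {x // x ∈ s}).symm i).2).symm
  have h1 : s.inf id = ⨅ x : {x // x ∈ s}, (x : Ideal R) := by
    rw [Finset.inf_eq_iInf, iInf_subtype]
    rfl
  have h2 : (⨅ x : {x // x ∈ s}, (x : Ideal R)) =
      ⨅ i, ((Fintype.equivFin {x // x ∈ s}).symm i : Ideal R) :=
    (Equiv.iInf_comp (g := fun x : {x // x ∈ s} => (x : Ideal R))
      (Fintype.equivFin {x // x ∈ s}).symm).symm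
  rw [← hsinf, h1, h2]
  exact (iInf_congr hbody).symm
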